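/- Let L ≥ 1, let α be an L×L complex matrix with ‖α‖ < 1, let U₁, V₁, U₂, V₂ ∈ U(L), and let ε ∈ (0,1). Then for every z ∈ S_ε the transfer matrix satisfies ‖T(z)‖ ≤ 4 c_ε² (1 + ‖α‖)² / (1 − ‖α‖²), where c_ε = max(1/(1−ε), 1+ε). -/

import Mathlib

open Matrix
open scoped Matrix.Norms.L2Operator ComplexOrder

/-- The block matrix `T₀(z) = [[z⁻¹ ρ̃⁻¹, ρ̃⁻¹ α*], [α ρ̃⁻¹, z ρ⁻¹]]`, where `ρ` (resp. `ρt`)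
stands for the positive semidefinite square root of `1 - α αᴴ` (resp. `1 - αᴴ α`), passed as
arguments. -/
noncomputable def T0mat (L : ℕ) (α ρ ρt : Matrix (Fin L) (Fin L) ℂ) (z : ℂ) :
    Matrix (Fin L ⊕ Fin L) (Fin L ⊕ Fin L) ℂ :=
  fromBlocks (z⁻¹ • ρt⁻¹) (ρt⁻¹ * αᴴ) (α * ρt⁻¹) (z • ρ⁻¹)

/-- The transfer matrix `T(z) = diag(V₂, U₂ᴴ) · T₀(z) · diag(V₁, U₁ᴴ) · T₀(1)`. -/
noncomputable def transferMat (L : ℕ) (α ρ ρt U₁ V₁ U₂ V₂ : Matrix (Fin L) (Fin L) ℂ) (z : ℂ) :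
    Matrix (Fin L ⊕ Fin L) (Fin L ⊕ Fin L) ℂ :=
  fromBlocks V₂ 0 0 U₂ᴴ * T0mat L α ρ ρt z * fromBlocks V₁ 0 0 U₁ᴴ * T0mat L α ρ ρt 1

section Aux

variable {L : ℕ}

private lemma sq_norm_elim (u v : Fin L → ℂ) :
    ‖((WithLp.equiv 2 ((Fin L ⊕ Fin L) → ℂ)).symm (Sum.elim u v) :
        EuclideanSpace ℂ (Fin L ⊕ Fin L))‖ ^ 2 =
      ‖((WithLp.equiv 2 (Fin L → ℂ)).symm u : EuclideanSpace ℂ (Fin L))‖ ^ 2 +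
      ‖((WithLp.equiv 2 (Fin L → ℂ)).symm v : EuclideanSpace ℂ (Fin L))‖ ^ 2 := by
  simp only [EuclideanSpace.norm_eq, WithLp.equiv_symm_apply, PiLp.toLp_apply]
  rw [Real.sq_sqrt (by positivity), Real.sq_sqrt (by positivity), Real.sq_sqrt (by positivity),
    Fintype.sum_sum_type]
  simp

private lemma norm_elim_le_left (u v : Fin L → ℂ) :
    ‖((WithLp.equiv 2 (Fin L → ℂ)).symm u : EuclideanSpace ℂ (Fin L))‖ ≤
      ‖((WithLp.equiv 2 ((Fin L ⊕ Fin L) → ℂ)).symm (Sum.elim u v) :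
        EuclideanSpace ℂ (Fin L ⊕ Fin L))‖ := by
  have h := sq_norm_elim u v
  nlinarith [norm_nonneg ((WithLp.equiv 2 (Fin L → ℂ)).symm u : EuclideanSpace ℂ (Fin L)),
    norm_nonneg ((WithLp.equiv 2 (Fin L → ℂ)).symm v : EuclideanSpace ℂ (Fin L)),
    norm_nonneg ((WithLp.equiv 2 ((Fin L ⊕ Fin L) → ℂ)).symm (Sum.elim u v) :
      EuclideanSpace ℂ (Fin L ⊕ Fin L))]

private lemma norm_elim_le_right (u v : Fin L → ℂ) :
    ‖((WithLp.equiv 2 (Fin L → ℂ)).symm v : EuclideanSpace ℂ (Fin L))‖ ≤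
      ‖((WithLp.equiv 2 ((Fin L ⊕ Fin L) → ℂ)).symm (Sum.elim u v) :
        EuclideanSpace ℂ (Fin L ⊕ Fin L))‖ := by
  have h := sq_norm_elim u v
  nlinarith [norm_nonneg ((WithLp.equiv 2 (Fin L → ℂ)).symm u : EuclideanSpace ℂ (Fin L)),
    norm_nonneg ((WithLp.equiv 2 (Fin L → ℂ)).symm v : EuclideanSpace ℂ (Fin L)),
    norm_nonneg ((WithLp.equiv 2 ((Fin L ⊕ Fin L) → ℂ)).symm (Sum.elim u v) :
      EuclideanSpace ℂ (Fin L ⊕ Fin L))]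

private lemma norm_elim_zero_right (u : Fin L → ℂ) :
    ‖((WithLp.equiv 2 ((Fin L ⊕ Fin L) → ℂ)).symm (Sum.elim u 0) :
        EuclideanSpace ℂ (Fin L ⊕ Fin L))‖ =
      ‖((WithLp.equiv 2 (Fin L → ℂ)).symm u : EuclideanSpace ℂ (Fin L))‖ := by
  have h := sq_norm_elim u 0
  rw [show ((WithLp.equiv 2 (Fin L → ℂ)).symm (0 : Fin L → ℂ)) = 0 from rfl, norm_zero] at h
  nlinarith [norm_nonneg ((WithLp.equiv 2 (Fin L → ℂ)).symm u : EuclideanSpace ℂ (Fin L)),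
    norm_nonneg ((WithLp.equiv 2 ((Fin L ⊕ Fin L) → ℂ)).symm (Sum.elim u 0) :
      EuclideanSpace ℂ (Fin L ⊕ Fin L))]

private lemma norm_elim_zero_left (v : Fin L → ℂ) :
    ‖((WithLp.equiv 2 ((Fin L ⊕ Fin L) → ℂ)).symm (Sum.elim 0 v) :
        EuclideanSpace ℂ (Fin L ⊕ Fin L))‖ =
      ‖((WithLp.equiv 2 (Fin L → ℂ)).symm v : EuclideanSpace ℂ (Fin L))‖ := by
  have h := sq_norm_elim 0 v
  rw [show ((WithLp.equiv 2 (Fin L → ℂ)).symm (0 : Fin L → ℂ)) = 0 from rfl, norm_zero] at h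
  nlinarith [norm_nonneg ((WithLp.equiv 2 (Fin L → ℂ)).symm v : EuclideanSpace ℂ (Fin L)),
    norm_nonneg ((WithLp.equiv 2 ((Fin L ⊕ Fin L) → ℂ)).symm (Sum.elim 0 v) :
      EuclideanSpace ℂ (Fin L ⊕ Fin L))]

private lemma norm_corner_A (A : Matrix (Fin L) (Fin L) ℂ) :
    ‖(fromBlocks A 0 0 0 : Matrix (Fin L ⊕ Fin L) (Fin L ⊕ Fin L) ℂ)‖ ≤ ‖A‖ := by
  rw [l2_opNorm_def]
  refine ContinuousLinearMap.opNorm_le_bound _ (norm_nonneg A) fun x => ?_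
  show ‖((WithLp.equiv 2 ((Fin L ⊕ Fin L) → ℂ)).symm
      ((fromBlocks A 0 0 0 : Matrix (Fin L ⊕ Fin L) (Fin L ⊕ Fin L) ℂ) *ᵥ (WithLp.equiv 2 _ x)) :
      EuclideanSpace ℂ (Fin L ⊕ Fin L))‖ ≤ ‖A‖ * ‖x‖
  set x' : (Fin L ⊕ Fin L) → ℂ := WithLp.equiv 2 _ x with hx'
  rw [fromBlocks_mulVec]
  simp only [zero_mulVec, add_zero, zero_add]
  rw [norm_elim_zero_right]
  refine (l2_opNorm_mulVec A ((WithLp.equiv 2 (Fin L → ℂ)).symm (x' ∘ Sum.inl))).trans ?_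
  refine mul_le_mul_of_nonneg_left ?_ (norm_nonneg A)
  have := norm_elim_le_left (x' ∘ Sum.inl) (x' ∘ Sum.inr)
  rwa [Sum.elim_comp_inl_inr, hx', Equiv.symm_apply_apply] at this

private lemma norm_corner_B (B : Matrix (Fin L) (Fin L) ℂ) :
    ‖(fromBlocks 0 B 0 0 : Matrix (Fin L ⊕ Fin L) (Fin L ⊕ Fin L) ℂ)‖ ≤ ‖B‖ := by
  rw [l2_opNorm_def]
  refine ContinuousLinearMap.opNorm_le_bound _ (norm_nonneg B) fun x => ?_
  show ‖((WithLp.equiv 2 ((Fin L ⊕ Fin L) → ℂ)).symm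
      ((fromBlocks 0 B 0 0 : Matrix (Fin L ⊕ Fin L) (Fin L ⊕ Fin L) ℂ) *ᵥ (WithLp.equiv 2 _ x)) :
      EuclideanSpace ℂ (Fin L ⊕ Fin L))‖ ≤ ‖B‖ * ‖x‖
  set x' : (Fin L ⊕ Fin L) → ℂ := WithLp.equiv 2 _ x with hx'
  rw [fromBlocks_mulVec]
  simp only [zero_mulVec, add_zero, zero_add]
  rw [norm_elim_zero_right]
  refine (l2_opNorm_mulVec B ((WithLp.equiv 2 (Fin L → ℂ)).symm (x' ∘ Sum.inr))).trans ?_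
  refine mul_le_mul_of_nonneg_left ?_ (norm_nonneg B)
  have := norm_elim_le_right (x' ∘ Sum.inl) (x' ∘ Sum.inr)
  rwa [Sum.elim_comp_inl_inr, hx', Equiv.symm_apply_apply] at this

private lemma norm_corner_C (C : Matrix (Fin L) (Fin L) ℂ) :
    ‖(fromBlocks 0 0 C 0 : Matrix (Fin L ⊕ Fin L) (Fin L ⊕ Fin L) ℂ)‖ ≤ ‖C‖ := by
  rw [l2_opNorm_def]
  refine ContinuousLinearMap.opNorm_le_bound _ (norm_nonneg C) fun x => ?_
  show ‖((WithLp.equiv 2 ((Fin L ⊕ Fin L) → ℂ)).symm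
      ((fromBlocks 0 0 C 0 : Matrix (Fin L ⊕ Fin L) (Fin L ⊕ Fin L) ℂ) *ᵥ (WithLp.equiv 2 _ x)) :
      EuclideanSpace ℂ (Fin L ⊕ Fin L))‖ ≤ ‖C‖ * ‖x‖
  set x' : (Fin L ⊕ Fin L) → ℂ := WithLp.equiv 2 _ x with hx'
  rw [fromBlocks_mulVec]
  simp only [zero_mulVec, add_zero, zero_add]
  rw [norm_elim_zero_left]
  refine (l2_opNorm_mulVec C ((WithLp.equiv 2 (Fin L → ℂ)).symm (x' ∘ Sum.inl))).trans ?_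
  refine mul_le_mul_of_nonneg_left ?_ (norm_nonneg C)
  have := norm_elim_le_left (x' ∘ Sum.inl) (x' ∘ Sum.inr)
  rwa [Sum.elim_comp_inl_inr, hx', Equiv.symm_apply_apply] at this

private lemma norm_corner_D (D : Matrix (Fin L) (Fin L) ℂ) :
    ‖(fromBlocks 0 0 0 D : Matrix (Fin L ⊕ Fin L) (Fin L ⊕ Fin L) ℂ)‖ ≤ ‖D‖ := by
  rw [l2_opNorm_def]
  refine ContinuousLinearMap.opNorm_le_bound _ (norm_nonneg D) fun x => ?_
  show ‖((WithLp.equiv 2 ((Fin L ⊕ Fin L) → ℂ)).symm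
      ((fromBlocks 0 0 0 D : Matrix (Fin L ⊕ Fin L) (Fin L ⊕ Fin L) ℂ) *ᵥ (WithLp.equiv 2 _ x)) :
      EuclideanSpace ℂ (Fin L ⊕ Fin L))‖ ≤ ‖D‖ * ‖x‖
  set x' : (Fin L ⊕ Fin L) → ℂ := WithLp.equiv 2 _ x with hx'
  rw [fromBlocks_mulVec]
  simp only [zero_mulVec, add_zero, zero_add]
  rw [norm_elim_zero_left]
  refine (l2_opNorm_mulVec D ((WithLp.equiv 2 (Fin L → ℂ)).symm (x' ∘ Sum.inr))).trans ?_
  refine mul_le_mul_of_nonneg_left ?_ (norm_nonneg D)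
  have := norm_elim_le_right (x' ∘ Sum.inl) (x' ∘ Sum.inr)
  rwa [Sum.elim_comp_inl_inr, hx', Equiv.symm_apply_apply] at this

private lemma norm_fromBlocks_le (A B C D : Matrix (Fin L) (Fin L) ℂ) :
    ‖(fromBlocks A B C D : Matrix (Fin L ⊕ Fin L) (Fin L ⊕ Fin L) ℂ)‖ ≤
      ‖A‖ + ‖B‖ + ‖C‖ + ‖D‖ := by
  have hdecomp : (fromBlocks A B C D : Matrix (Fin L ⊕ Fin L) (Fin L ⊕ Fin L) ℂ) =
      fromBlocks A 0 0 0 + fromBlocks 0 B 0 0 + fromBlocks 0 0 C 0 + fromBlocks 0 0 0 D := by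
    simp [Matrix.fromBlocks_add]
  rw [hdecomp]
  have t1 := norm_add_le (fromBlocks A 0 0 0 + fromBlocks 0 B 0 0 + fromBlocks 0 0 C 0)
    (fromBlocks (0 : Matrix (Fin L) (Fin L) ℂ) 0 0 D)
  have t2 := norm_add_le (fromBlocks A 0 0 0 + fromBlocks 0 B 0 0)
    (fromBlocks (0 : Matrix (Fin L) (Fin L) ℂ) 0 C 0)
  have t3 := norm_add_le (fromBlocks A (0 : Matrix (Fin L) (Fin L) ℂ) 0 0)
    (fromBlocks 0 B (0 : Matrix (Fin L) (Fin L) ℂ) 0)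
  linarith [norm_corner_A A, norm_corner_B B, norm_corner_C C, norm_corner_D D]

private lemma norm_one_matrix {n : Type*} [Fintype n] [DecidableEq n] [Nonempty n] :
    ‖(1 : Matrix n n ℂ)‖ = 1 := by
  have h1 : ‖(1 : Matrix n n ℂ)‖ * ‖(1 : Matrix n n ℂ)‖ = ‖(1 : Matrix n n ℂ)‖ := by
    conv_lhs => rw [← l2_opNorm_conjTranspose_mul_self (1 : Matrix n n ℂ)]
    simp
  have hne : (1 : Matrix n n ℂ) ≠ 0 := by
    intro h
    obtain ⟨i⟩ := ‹Nonempty n›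
    have := congrFun (congrFun h i) i
    simp [Matrix.one_apply] at this
  have h0 : ‖(1 : Matrix n n ℂ)‖ ≠ 0 := norm_ne_zero_iff.mpr hne
  have h2 : ‖(1 : Matrix n n ℂ)‖ * ‖(1 : Matrix n n ℂ)‖ = ‖(1 : Matrix n n ℂ)‖ * 1 := by
    rw [mul_one, h1]
  exact mul_left_cancel₀ h0 h2

private lemma norm_inv_sq_le [Nonempty (Fin L)] (β σ : Matrix (Fin L) (Fin L) ℂ)
    (hβ : ‖β‖ < 1) (hσ : σ.PosSemidef) (h2 : σ * σ = 1 - β) :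
    ‖σ⁻¹‖ * ‖σ⁻¹‖ ≤ (1 - ‖β‖)⁻¹ := by
  have hinv : (1 - β)⁻¹ = ∑' n : ℕ, β ^ n :=
    Matrix.inv_eq_right_inv (mul_neg_geom_series β hβ)
  have hbound : ‖(1 - β)⁻¹‖ ≤ (1 - ‖β‖)⁻¹ := by
    rw [hinv]
    have h := tsum_geometric_le_of_norm_lt_one β hβ
    rwa [norm_one_matrix, sub_self, zero_add] at h
  have hmul : σ⁻¹ * σ⁻¹ = (1 - β)⁻¹ := by rw [← h2, Matrix.mul_inv_rev]
  have hherm : (σ⁻¹)ᴴ = σ⁻¹ := by rw [Matrix.conjTranspose_nonsing_inv, hσ.1]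
  calc ‖σ⁻¹‖ * ‖σ⁻¹‖ = ‖(σ⁻¹)ᴴ * σ⁻¹‖ := (l2_opNorm_conjTranspose_mul_self _).symm
    _ = ‖(1 - β)⁻¹‖ := by rw [hherm, hmul]
    _ ≤ (1 - ‖β‖)⁻¹ := hbound

private lemma norm_diag_unitary [Nonempty (Fin L)] (V W : Matrix (Fin L) (Fin L) ℂ)
    (hV : Vᴴ * V = 1) (hW : Wᴴ * W = 1) :
    ‖(fromBlocks V 0 0 W : Matrix (Fin L ⊕ Fin L) (Fin L ⊕ Fin L) ℂ)‖ = 1 := by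
  have h : (fromBlocks V 0 0 W : Matrix (Fin L ⊕ Fin L) (Fin L ⊕ Fin L) ℂ)ᴴ *
      fromBlocks V 0 0 W = 1 := by
    rw [fromBlocks_conjTranspose, fromBlocks_multiply]
    simp [hV, hW, ← fromBlocks_one]
  have h1 := l2_opNorm_conjTranspose_mul_self
    (fromBlocks V 0 0 W : Matrix (Fin L ⊕ Fin L) (Fin L ⊕ Fin L) ℂ)
  rw [h, norm_one_matrix] at h1
  rcases mul_self_eq_one_iff.mp h1.symm with h' | h'
  · exact h'
  · nlinarith [norm_nonneg (fromBlocks V 0 0 W : Matrix (Fin L ⊕ Fin L) (Fin L ⊕ Fin L) ℂ)]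

end Aux

set_option maxHeartbeats 1000000

theorem stmt_8 (L : ℕ) (hL : 1 ≤ L) (α ρ ρt U₁ V₁ U₂ V₂ : Matrix (Fin L) (Fin L) ℂ)
    (hα : ‖α‖ < 1)
    (hρ : ρ.PosSemidef) (hρ2 : ρ * ρ = 1 - α * αᴴ)
    (hρt : ρt.PosSemidef) (hρt2 : ρt * ρt = 1 - αᴴ * α)
    (hU₁ : U₁ ∈ Matrix.unitaryGroup (Fin L) ℂ) (hV₁ : V₁ ∈ Matrix.unitaryGroup (Fin L) ℂ)
    (hU₂ : U₂ ∈ Matrix.unitaryGroup (Fin L) ℂ) (hV₂ : V₂ ∈ Matrix.unitaryGroup (Fin L) ℂ)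
    (ε : ℝ) (hε : ε ∈ Set.Ioo (0 : ℝ) 1) :
    ∀ z : ℂ, 1 - ε < ‖z‖ → ‖z‖ < 1 + ε →
      ‖transferMat L α ρ ρt U₁ V₁ U₂ V₂ z‖ ≤
        4 * (max (1 / (1 - ε)) (1 + ε)) ^ 2 * (1 + ‖α‖) ^ 2 / (1 - ‖α‖ ^ 2) := by
  intro z hz1 hz2
  haveI : Nonempty (Fin L) := Fin.pos_iff_nonempty.mp hL
  obtain ⟨hε0, hε1⟩ := hε
  set c : ℝ := max (1 / (1 - ε)) (1 + ε) with hc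
  have hc1 : (1 : ℝ) ≤ c := le_max_of_le_right (by linarith)
  have hc0 : (0 : ℝ) < c := lt_of_lt_of_le one_pos hc1
  have ha0 : (0:ℝ) ≤ ‖α‖ := norm_nonneg α
  have h1a : (0:ℝ) < 1 - ‖α‖ ^ 2 := by nlinarith
  set s : ℝ := Real.sqrt (1 - ‖α‖ ^ 2) with hs
  have hs0 : 0 < s := Real.sqrt_pos.mpr h1a
  have hss : s * s = 1 - ‖α‖ ^ 2 := Real.mul_self_sqrt h1a.le
  have hsinv : (0:ℝ) ≤ s⁻¹ := by positivity
  -- bounds on the inverses of the square roots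
  have hβt : ‖αᴴ * α‖ < 1 := by rw [l2_opNorm_conjTranspose_mul_self]; nlinarith
  have hβnorm : ‖α * αᴴ‖ = ‖α‖ * ‖α‖ := by
    have h := l2_opNorm_conjTranspose_mul_self αᴴ
    rw [conjTranspose_conjTranspose, l2_opNorm_conjTranspose] at h
    exact h
  have hβ : ‖α * αᴴ‖ < 1 := by rw [hβnorm]; nlinarith
  have hrt : ‖ρt⁻¹‖ ≤ s⁻¹ := by
    have h := norm_inv_sq_le (αᴴ * α) ρt hβt hρt hρt2
    rw [l2_opNorm_conjTranspose_mul_self] at h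
    have h2 : ‖ρt⁻¹‖ ≤ Real.sqrt ((1 - ‖α‖ ^ 2)⁻¹) := by
      rw [← Real.sqrt_mul_self (norm_nonneg ρt⁻¹)]
      apply Real.sqrt_le_sqrt
      rw [show ‖α‖ * ‖α‖ = ‖α‖ ^ 2 by ring] at h
      exact h
    rwa [Real.sqrt_inv] at h2
  have hr : ‖ρ⁻¹‖ ≤ s⁻¹ := by
    have h := norm_inv_sq_le (α * αᴴ) ρ hβ hρ hρ2
    rw [hβnorm] at h
    have h2 : ‖ρ⁻¹‖ ≤ Real.sqrt ((1 - ‖α‖ ^ 2)⁻¹) := by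
      rw [← Real.sqrt_mul_self (norm_nonneg ρ⁻¹)]
      apply Real.sqrt_le_sqrt
      rw [show ‖α‖ * ‖α‖ = ‖α‖ ^ 2 by ring] at h
      exact h
    rwa [Real.sqrt_inv] at h2
  -- bound on T0mat
  set B : ℝ := 2 * c * (1 + ‖α‖) * s⁻¹ with hB
  have hB0 : (0:ℝ) ≤ B := by
    apply mul_nonneg _ hsinv
    nlinarith
  have hT0 : ∀ w : ℂ, ‖w⁻¹‖ ≤ c → ‖w‖ ≤ c → ‖T0mat L α ρ ρt w‖ ≤ B := by
    intro w hw1 hw2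
    simp only [T0mat]
    refine (norm_fromBlocks_le _ _ _ _).trans ?_
    have e1 : ‖w⁻¹ • ρt⁻¹‖ ≤ c * s⁻¹ := by
      rw [norm_smul]
      exact mul_le_mul hw1 hrt (norm_nonneg _) hc0.le
    have e2 : ‖ρt⁻¹ * αᴴ‖ ≤ s⁻¹ * ‖α‖ := by
      refine (l2_opNorm_mul _ _).trans ?_
      rw [l2_opNorm_conjTranspose]
      exact mul_le_mul_of_nonneg_right hrt ha0
    have e3 : ‖α * ρt⁻¹‖ ≤ ‖α‖ * s⁻¹ :=
      (l2_opNorm_mul _ _).trans (mul_le_mul_of_nonneg_left hrt ha0)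
    have e4 : ‖w • ρ⁻¹‖ ≤ c * s⁻¹ := by
      rw [norm_smul]
      exact mul_le_mul hw2 hr (norm_nonneg _) hc0.le
    have key : (0:ℝ) ≤ ‖α‖ * s⁻¹ * (c - 1) :=
      mul_nonneg (mul_nonneg ha0 hsinv) (by linarith)
    rw [hB]
    nlinarith
  -- the unitary diagonal blocks have norm 1
  have hsV₁ : V₁ᴴ * V₁ = 1 := by
    have := (Matrix.mem_unitaryGroup_iff'.mp hV₁)
    rwa [Matrix.star_eq_conjTranspose] at this
  have hsU₁ : (U₁ᴴ)ᴴ * U₁ᴴ = 1 := by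
    rw [conjTranspose_conjTranspose, ← Matrix.star_eq_conjTranspose]
    exact Matrix.mem_unitaryGroup_iff.mp hU₁
  have hsV₂ : V₂ᴴ * V₂ = 1 := by
    have := (Matrix.mem_unitaryGroup_iff'.mp hV₂)
    rwa [Matrix.star_eq_conjTranspose] at this
  have hsU₂ : (U₂ᴴ)ᴴ * U₂ᴴ = 1 := by
    rw [conjTranspose_conjTranspose, ← Matrix.star_eq_conjTranspose]
    exact Matrix.mem_unitaryGroup_iff.mp hU₂
  have hD1 : ‖(fromBlocks V₁ 0 0 U₁ᴴ : Matrix (Fin L ⊕ Fin L) (Fin L ⊕ Fin L) ℂ)‖ = 1 :=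
    norm_diag_unitary V₁ U₁ᴴ hsV₁ hsU₁
  have hD2 : ‖(fromBlocks V₂ 0 0 U₂ᴴ : Matrix (Fin L ⊕ Fin L) (Fin L ⊕ Fin L) ℂ)‖ = 1 :=
    norm_diag_unitary V₂ U₂ᴴ hsV₂ hsU₂
  -- bounds for z and 1
  have hz0 : (0:ℝ) < ‖z‖ := lt_trans (by linarith) hz1
  have hzc1 : ‖z⁻¹‖ ≤ c := by
    rw [norm_inv]
    refine le_trans ?_ (le_max_left _ _)
    rw [one_div]
    exact inv_anti₀ (by linarith) hz1.le
  have hzc2 : ‖z‖ ≤ c := by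
    exact le_trans hz2.le (le_max_right _ _)
  have honec : ‖(1:ℂ)‖ ≤ c := by rw [norm_one]; exact hc1
  have honec' : ‖(1:ℂ)⁻¹‖ ≤ c := by rw [inv_one, norm_one]; exact hc1
  have hB1 := hT0 z hzc1 hzc2
  have hB2 := hT0 1 honec' honec
  -- assemble
  have k1 : ‖fromBlocks V₂ 0 0 U₂ᴴ * T0mat L α ρ ρt z‖ ≤ B := by
    refine (l2_opNorm_mul _ _).trans ?_
    rw [hD2, one_mul]
    exact hB1
  have k2 : ‖fromBlocks V₂ 0 0 U₂ᴴ * T0mat L α ρ ρt z * fromBlocks V₁ 0 0 U₁ᴴ‖ ≤ B := by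
    refine (l2_opNorm_mul _ _).trans ?_
    rw [hD1, mul_one]
    exact k1
  have k3 : ‖transferMat L α ρ ρt U₁ V₁ U₂ V₂ z‖ ≤ B * B := by
    rw [transferMat]
    exact (l2_opNorm_mul _ _).trans (mul_le_mul k2 hB2 (norm_nonneg _) hB0)
  have hfin : B * B = 4 * c ^ 2 * (1 + ‖α‖) ^ 2 / (1 - ‖α‖ ^ 2) := by
    rw [hB, ← hss]
    field_simp
    ring
  rw [← hfin]
  exact k3
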